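/- Let K be a simplicial set, (m_n)_{n∈ℕ} a coherent family of averaging operators, and (k_n)_{n∈ℕ} a family of maps assigning to each triple (σ, τ, τ′) ∈ K_n × Γ_n × Γ_n an (n+1)-chain k_n(σ, τ, τ′) of K × Γ with integer coefficients such that: for each n, sup over all triples of ‖k_n(σ, τ, τ′)‖₁ is finite; ∂ k_0(σ, τ, τ′) = (σ, τ) − (σ, τ′); and for n ≥ 1, ∂ k_n(σ, τ, τ′) = (σ, τ) − (σ, τ′) − Σ_{i=0}^{n} (−1)^i k_{n−1}(∂_i σ, ∂_i τ, ∂_i τ′). Define m_* : B^n(K × Γ) → B^n(K) by m_*(f)(σ) = m_n(τ ↦ f(σ, τ)), p* : B^n(K) → B^n(K × Γ) by p*(f)(σ, τ) = f(σ), h_0 = 0, and h_{n+1} : B^{n+1}(K × Γ) → B^n(K × Γ) by h_{n+1}(f)(σ, τ) = m_n(τ′ ↦ f(k_n(σ, τ, τ′))), where a bounded cochain evaluates on a chain by linearity. Then each h_{n+1} is a bounded linear operator, and the operators (h_n) form a cochain homotopy between p* ∘ m_* and the identity: for every n ∈ ℕ and every f ∈ B^n(K × Γ), f − p*(m_*(f))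 = h_{n+1}(∂* f) + ∂*(h_n(f)). -/

import Mathlib

open CategoryTheory Simplicial

set_option maxHeartbeats 1000000

/-- `Γ n`: the set of `n`-simplices of the Δ-set `Δ[∞]`,
i.e. strictly increasing maps `Fin (n+1) → ℕ`. -/
def Gma (n : ℕ) : Type := {f : Fin (n + 1) → ℕ // StrictMono f}

/-- The `i`-th face map `∂ᵢ : Γ (n+1) → Γ n`, precomposition with the unique strictly
increasing map `Fin (n+1) → Fin (n+2)` omitting `i`. -/
def faceG {n : ℕ} (i : Fin (n + 2)) (τ : Gma (n + 1)) : Gma n :=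
  ⟨fun j => τ.1 (i.succAbove j), τ.2.comp (Fin.strictMono_succAbove i)⟩

/-- A real-valued function is bounded. -/
def IsBdd {X : Type*} (f : X → ℝ) : Prop := ∃ C : ℝ, ∀ x, |f x| ≤ C

/-- The sup norm of a real valued function. -/
noncomputable def supN {X : Type*} (f : X → ℝ) : ℝ := ⨆ x, |f x|

/-- The space of bounded real-valued functions on `X`, as a submodule of `X → ℝ`. -/
def bddFns (X : Type*) : Submodule ℝ (X → ℝ) where
  carrier := {f | IsBdd f}
  add_mem' := by
    rintro f g ⟨C, hC⟩ ⟨D, hD⟩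
    exact ⟨C + D, fun x => (abs_add_le _ _).trans (add_le_add (hC x) (hD x))⟩
  zero_mem' := ⟨0, fun x => by simp⟩
  smul_mem' := by
    rintro r f ⟨C, hC⟩
    refine ⟨|r| * C, fun x => ?_⟩
    rw [Pi.smul_apply, smul_eq_mul, abs_mul]
    exact mul_le_mul_of_nonneg_left (hC x) (abs_nonneg r)

lemma const_mem_bddFns (X : Type*) (r : ℝ) : (fun _ : X => r) ∈ bddFns X :=
  ⟨|r|, fun _ => le_rfl⟩

lemma comp_mem_bddFns {X Y : Type*} {f : Y → ℝ} (hf : f ∈ bddFns Y) (g : X → Y) :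
    (fun x => f (g x)) ∈ bddFns X := by
  obtain ⟨C, hC⟩ := hf
  exact ⟨C, fun x => hC (g x)⟩

/-- The simplicial coboundary operator associated to a system of faces. -/
noncomputable def dgen {X Y : Type*} (N : ℕ) (face : Fin N → Y → X) :
    (X → ℝ) →ₗ[ℝ] (Y → ℝ) where
  toFun f := fun y => ∑ i : Fin N, (-1 : ℝ) ^ (i : ℕ) * f (face i y)
  map_add' f g := by
    funext y
    simp only [Pi.add_apply, mul_add]
    rw [Finset.sum_add_distrib]
  map_smul' r f := by
    funext y
    simp only [Pi.smul_apply, smul_eq_mul, RingHom.id_apply, Finset.mul_sum]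
    exact Finset.sum_congr rfl fun i _ => by ring

/-- The ℓ¹-norm of a chain with integer coefficients. -/
def l1 {X : Type*} (c : X →₀ ℤ) : ℤ := ∑ x ∈ c.support, |c x|

/-- Evaluation of a cochain on a chain, by linearity. -/
noncomputable def evalC {X : Type*} (f : X → ℝ) (c : X →₀ ℤ) : ℝ :=
  ∑ x ∈ c.support, ((c x : ℤ) : ℝ) * f x

/-- The `i`-th face map of the unraveling `K × Γ`. -/
def facePfun (K : SSet) {n : ℕ} (i : Fin (n + 2)) (x : K _⦋n + 1⦌ × Gma (n + 1)) :
    K _⦋n⦌ × Gma n :=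
  (K.δ i x.1, faceG i x.2)

/-- The boundary operator on integral chains of `K × Γ`. -/
noncomputable def bdryP (K : SSet) (n : ℕ) (c : (K _⦋n + 1⦌ × Gma (n + 1)) →₀ ℤ) :
    (K _⦋n⦌ × Gma n) →₀ ℤ :=
  ∑ i : Fin (n + 2), ((-1 : ℤ) ^ (i : ℕ)) • Finsupp.mapDomain (facePfun K i) c

/-- The coboundary operator on cochains of `K × Γ`: `∂*f(x) = ∑ᵢ (-1)ⁱ f(∂ᵢ x)`. -/
noncomputable def dF (K : SSet) (n : ℕ) (f : (K _⦋n⦌ × Gma n) → ℝ) :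
    (K _⦋n + 1⦌ × Gma (n + 1)) → ℝ :=
  fun x => ∑ i : Fin (n + 2), (-1 : ℝ) ^ (i : ℕ) * f (facePfun K i x)

/-- Extension of the averaging operator `m n` to all functions `Γ n → ℝ`
(by `0` on unbounded functions); on bounded functions it is just `m n`. -/
noncomputable def Mext (m : ∀ n : ℕ, ↥(bddFns (Gma n)) →ₗ[ℝ] ℝ) (n : ℕ)
    (g : Gma n → ℝ) : ℝ :=
  @dite _ (IsBdd g) (Classical.dec _) (fun h => m n ⟨g, h⟩) (fun _ => 0)

/-- `m_* : B^n(K × Γ) → B^n(K)`, averaging over the fibers: `m_*(f)(σ) = m_n (τ ↦ f (σ, τ))`. -/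
noncomputable def mstarF (m : ∀ n : ℕ, ↥(bddFns (Gma n)) →ₗ[ℝ] ℝ) (K : SSet) (n : ℕ)
    (f : (K _⦋n⦌ × Gma n) → ℝ) : K _⦋n⦌ → ℝ :=
  fun σ => Mext m n fun τ => f (σ, τ)

/-- `p* : B^n(K) → B^n(K × Γ)`, `p*(f)(σ, τ) = f σ`. -/
def pstarF (K : SSet) (n : ℕ) (f : K _⦋n⦌ → ℝ) : (K _⦋n⦌ × Gma n) → ℝ :=
  fun x => f x.1

/-- The homotopy operator `h_{n+1} : B^{n+1}(K × Γ) → B^n(K × Γ)`,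
`h_{n+1}(f)(σ, τ) = m_n (τ' ↦ f (k_n (σ, τ, τ')))`. -/
noncomputable def hF (m : ∀ n : ℕ, ↥(bddFns (Gma n)) →ₗ[ℝ] ℝ) (K : SSet)
    (k : ∀ n : ℕ, K _⦋n⦌ → Gma n → Gma n → ((K _⦋n + 1⦌ × Gma (n + 1)) →₀ ℤ)) (n : ℕ)
    (f : (K _⦋n + 1⦌ × Gma (n + 1)) → ℝ) : (K _⦋n⦌ × Gma n) → ℝ :=
  fun x => Mext m n fun τ' => evalC f (k n x.1 x.2 τ')


section Helpers

variable {X Y : Type*}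

lemma evalC_eq_lc (f : X → ℝ) (c : X →₀ ℤ) :
    evalC f c = Finsupp.linearCombination ℤ f c := by
  simp [evalC, Finsupp.linearCombination_apply, Finsupp.sum, zsmul_eq_mul]

lemma evalC_single' (f : X → ℝ) (x : X) : evalC f (Finsupp.single x (1 : ℤ)) = f x := by
  simp [evalC_eq_lc]

lemma evalC_sub' (f : X → ℝ) (c d : X →₀ ℤ) :
    evalC f (c - d) = evalC f c - evalC f d := by
  simp [evalC_eq_lc, map_sub]

lemma evalC_zsmul' (f : X → ℝ) (z : ℤ) (c : X →₀ ℤ) :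
    evalC f (z • c) = (z : ℝ) * evalC f c := by
  rw [evalC_eq_lc, evalC_eq_lc, map_smul, zsmul_eq_mul]

lemma evalC_finsum' {ι : Type*} (f : X → ℝ) (s : Finset ι) (c : ι → (X →₀ ℤ)) :
    evalC f (∑ i ∈ s, c i) = ∑ i ∈ s, evalC f (c i) := by
  simp [evalC_eq_lc, map_sum]

lemma evalC_mapDomain' (f : X → ℝ) (g : Y → X) (c : Y →₀ ℤ) :
    evalC f (Finsupp.mapDomain g c) = evalC (fun y => f (g y)) c := by
  rw [evalC_eq_lc, evalC_eq_lc, Finsupp.linearCombination_mapDomain]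
  rfl

lemma evalC_addf (f g : X → ℝ) (c : X →₀ ℤ) :
    evalC (f + g) c = evalC f c + evalC g c := by
  simp [evalC, Pi.add_apply, mul_add, Finset.sum_add_distrib]

lemma evalC_smulf (r : ℝ) (f : X → ℝ) (c : X →₀ ℤ) :
    evalC (r • f) c = r * evalC f c := by
  simp only [evalC, Pi.smul_apply, smul_eq_mul, Finset.mul_sum]
  exact Finset.sum_congr rfl fun x _ => by ring

lemma l1_nonneg (c : X →₀ ℤ) : (0 : ℤ) ≤ l1 c :=
  Finset.sum_nonneg fun x _ => abs_nonneg _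

lemma evalC_abs_le (f : X → ℝ) (c : X →₀ ℤ) {B : ℝ} (hB : 0 ≤ B)
    (hf : ∀ x, |f x| ≤ B) : |evalC f c| ≤ (l1 c : ℝ) * B := by
  calc |evalC f c| ≤ ∑ x ∈ c.support, |((c x : ℤ) : ℝ) * f x| :=
        Finset.abs_sum_le_sum_abs _ _
    _ ≤ ∑ x ∈ c.support, |((c x : ℤ) : ℝ)| * B := by
        refine Finset.sum_le_sum fun x _ => ?_
        rw [abs_mul]
        exact mul_le_mul_of_nonneg_left (hf x) (abs_nonneg _)
    _ = (l1 c : ℝ) * B := by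
        rw [l1]
        push_cast
        rw [Finset.sum_mul]

lemma supN_nonneg (f : X → ℝ) : 0 ≤ supN f := Real.iSup_nonneg fun x => abs_nonneg _

lemma le_supN {f : X → ℝ} (hf : IsBdd f) (x : X) : |f x| ≤ supN f := by
  obtain ⟨C, hC⟩ := hf
  exact le_ciSup ⟨C, by rintro _ ⟨x, rfl⟩; exact hC x⟩ x

lemma supN_le {f : X → ℝ} {C : ℝ} (hC : 0 ≤ C) (h : ∀ x, |f x| ≤ C) : supN f ≤ C :=
  Real.iSup_le h hC

lemma isBdd_const (r : ℝ) : IsBdd (fun _ : X => r) := ⟨|r|, fun _ => le_rfl⟩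

lemma isBdd_add {f g : X → ℝ} (hf : IsBdd f) (hg : IsBdd g) :
    IsBdd (fun t => f t + g t) := by
  obtain ⟨C, hC⟩ := hf; obtain ⟨D, hD⟩ := hg
  exact ⟨C + D, fun t => (abs_add_le _ _).trans (add_le_add (hC t) (hD t))⟩

lemma isBdd_sub {f g : X → ℝ} (hf : IsBdd f) (hg : IsBdd g) :
    IsBdd (fun t => f t - g t) := by
  obtain ⟨C, hC⟩ := hf; obtain ⟨D, hD⟩ := hg
  exact ⟨C + D, fun t => (abs_sub _ _).trans (add_le_add (hC t) (hD t))⟩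

lemma isBdd_const_mul (r : ℝ) {g : X → ℝ} (hg : IsBdd g) :
    IsBdd (fun t => r * g t) := by
  obtain ⟨C, hC⟩ := hg
  exact ⟨|r| * C, fun t => by
    rw [abs_mul]; exact mul_le_mul_of_nonneg_left (hC t) (abs_nonneg r)⟩

lemma isBdd_finsum {ι : Type*} (s : Finset ι) (G : ι → X → ℝ) :
    (∀ i ∈ s, IsBdd (G i)) → IsBdd (fun t => ∑ i ∈ s, G i t) := by
  classical
  induction s using Finset.induction_on with
  | empty => intro _; exact ⟨0, fun t => by simp⟩
  | @insert a s hx ih =>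
    intro hG
    have e : (fun t => ∑ i ∈ insert a s, G i t)
        = fun t => G a t + ∑ i ∈ s, G i t := by
      funext t; rw [Finset.sum_insert hx]
    rw [e]
    exact isBdd_add (hG a (Finset.mem_insert_self a s))
      (ih fun i hi => hG i (Finset.mem_insert_of_mem hi))

lemma evalC_dF (K : SSet) (n : ℕ) (f : (K _⦋n⦌ × Gma n) → ℝ)
    (c : (K _⦋n + 1⦌ × Gma (n + 1)) →₀ ℤ) :
    evalC (dF K n f) c = evalC f (bdryP K n c) := by
  rw [bdryP, evalC_finsum']
  have e : ∀ i : Fin (n + 2),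
      evalC f (((-1 : ℤ) ^ (i : ℕ)) • Finsupp.mapDomain (facePfun K i) c)
        = (-1 : ℝ) ^ (i : ℕ) * evalC (fun x => f (facePfun K i x)) c := by
    intro i
    rw [evalC_zsmul', evalC_mapDomain']
    push_cast
    ring
  simp only [e]
  unfold evalC dF
  simp only [Finset.mul_sum]
  rw [Finset.sum_comm]
  exact Finset.sum_congr rfl fun i _ => Finset.sum_congr rfl fun x _ => by ring

end Helpers

section MextLemmas

variable (m : ∀ n : ℕ, ↥(bddFns (Gma n)) →ₗ[ℝ] ℝ)

lemma Mext_eq {n : ℕ} {g : Gma n → ℝ} (h : IsBdd g) : Mext m n g = m n ⟨g, h⟩ :=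
  dif_pos h

lemma Mext_zero (n : ℕ) : Mext m n (fun _ => (0 : ℝ)) = 0 := by
  rw [Mext_eq m ⟨0, fun _ => by simp⟩]
  exact (congrArg (m n) (Subtype.ext rfl)).trans (map_zero _)

lemma Mext_add {n : ℕ} {g g' : Gma n → ℝ} (hg : IsBdd g) (hg' : IsBdd g') :
    Mext m n (fun t => g t + g' t) = Mext m n g + Mext m n g' := by
  have h : IsBdd (fun t => g t + g' t) := isBdd_add hg hg'
  rw [Mext_eq m h, Mext_eq m hg, Mext_eq m hg', ← map_add]
  exact congrArg (m n) (Subtype.ext rfl)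

lemma Mext_sub {n : ℕ} {g g' : Gma n → ℝ} (hg : IsBdd g) (hg' : IsBdd g') :
    Mext m n (fun t => g t - g' t) = Mext m n g - Mext m n g' := by
  have h : IsBdd (fun t => g t - g' t) := isBdd_sub hg hg'
  rw [Mext_eq m h, Mext_eq m hg, Mext_eq m hg', ← map_sub]
  exact congrArg (m n) (Subtype.ext rfl)

lemma Mext_const_mul {n : ℕ} (r : ℝ) {g : Gma n → ℝ} (hg : IsBdd g) :
    Mext m n (fun t => r * g t) = r * Mext m n g := by
  have h : IsBdd (fun t => r * g t) := isBdd_const_mul r hg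
  rw [Mext_eq m h, Mext_eq m hg]
  have : m n ⟨fun t => r * g t, h⟩ = m n (r • (⟨g, hg⟩ : ↥(bddFns (Gma n)))) :=
    congrArg (m n) (Subtype.ext rfl)
  rw [this, map_smul, smul_eq_mul]

lemma Mext_finsum {n : ℕ} {ι : Type*} (s : Finset ι) (G : ι → Gma n → ℝ) :
    (∀ i ∈ s, IsBdd (G i)) →
      Mext m n (fun t => ∑ i ∈ s, G i t) = ∑ i ∈ s, Mext m n (G i) := by
  classical
  induction s using Finset.induction_on with
  | empty => intro _; simpa using Mext_zero m n
  | @insert a s hx ih =>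
    intro hG
    have e : (fun t => ∑ i ∈ insert a s, G i t)
        = fun t => G a t + ∑ i ∈ s, G i t := by
      funext t; rw [Finset.sum_insert hx]
    have hG' : ∀ i ∈ s, IsBdd (G i) := fun i hi => hG i (Finset.mem_insert_of_mem hi)
    rw [e, Mext_add m (hG a (Finset.mem_insert_self a s)) (isBdd_finsum s G hG'),
      ih hG', Finset.sum_insert hx]

lemma Mext_abs_le (hnorm : ∀ (n : ℕ) (f : ↥(bddFns (Gma n))), |m n f| ≤ supN (f : Gma n → ℝ))
    {n : ℕ} {g : Gma n → ℝ} (hg : IsBdd g) : |Mext m n g| ≤ supN g := by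
  rw [Mext_eq m hg]
  exact hnorm n _

lemma Mext_const (hconst : ∀ (n : ℕ) (r : ℝ), m n ⟨fun _ => r, const_mem_bddFns _ r⟩ = r)
    (n : ℕ) (r : ℝ) : Mext m n (fun _ => r) = r := by
  rw [Mext_eq m (const_mem_bddFns (Gma n) r)]
  exact hconst n r

lemma Mext_face
    (hcoherent : ∀ (n : ℕ) (i : Fin (n + 2)) (f : ↥(bddFns (Gma n))),
      m (n + 1) ⟨fun τ => (f : Gma n → ℝ) (faceG i τ), comp_mem_bddFns f.2 (faceG i)⟩
        = m n f)
    {n : ℕ} (i : Fin (n + 2)) {g : Gma n → ℝ} (hg : IsBdd g) :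
    Mext m (n + 1) (fun τ => g (faceG i τ)) = Mext m n g := by
  rw [Mext_eq m (comp_mem_bddFns hg (faceG i)), Mext_eq m hg]
  exact hcoherent n i ⟨g, hg⟩

end MextLemmas

/-- Given a coherent family of averaging operators `m` and a uniformly
ℓ¹-bounded family of chains `k` with the chain homotopy boundary identities, the operators
`h_{n+1}(f)(σ,τ) = m_n (τ' ↦ f(k_n(σ,τ,τ')))` (and `h_0 = 0`) are bounded linear operators
forming a cochain homotopy between `p* ∘ m_*` and the identity on bounded cochains:
`f - p*(m_*(f)) = h_{n+1}(∂* f) + ∂*(h_n f)`. -/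
theorem homotopy_operators_bounded_and_cochain_homotopy
    (m : ∀ n : ℕ, ↥(bddFns (Gma n)) →ₗ[ℝ] ℝ)
    (hnorm : ∀ (n : ℕ) (f : ↥(bddFns (Gma n))), |m n f| ≤ supN (f : Gma n → ℝ))
    (hconst : ∀ (n : ℕ) (r : ℝ), m n ⟨fun _ => r, const_mem_bddFns _ r⟩ = r)
    (hcoherent : ∀ (n : ℕ) (i : Fin (n + 2)) (f : ↥(bddFns (Gma n))),
      m (n + 1) ⟨fun τ => (f : Gma n → ℝ) (faceG i τ), comp_mem_bddFns f.2 (faceG i)⟩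
        = m n f)
    (K : SSet)
    (k : ∀ n : ℕ, K _⦋n⦌ → Gma n → Gma n → ((K _⦋n + 1⦌ × Gma (n + 1)) →₀ ℤ))
    (hk_bdd : ∀ n : ℕ, ∃ C : ℝ, ∀ (σ : K _⦋n⦌) (τ τ' : Gma n), ((l1 (k n σ τ τ') : ℤ) : ℝ) ≤ C)
    (hk0 : ∀ (σ : K _⦋0⦌) (τ τ' : Gma 0),
      bdryP K 0 (k 0 σ τ τ') = Finsupp.single (σ, τ) 1 - Finsupp.single (σ, τ') 1)
    (hk : ∀ (n : ℕ) (σ : K _⦋n + 1⦌) (τ τ' : Gma (n + 1)),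
      bdryP K (n + 1) (k (n + 1) σ τ τ')
        = Finsupp.single (σ, τ) 1 - Finsupp.single (σ, τ') 1
          - ∑ i : Fin (n + 2), ((-1 : ℤ) ^ (i : ℕ)) •
              k n (K.δ i σ) (faceG i τ) (faceG i τ')) :
    (∀ n : ℕ,
      (∀ f g : (K _⦋n + 1⦌ × Gma (n + 1)) → ℝ, IsBdd f → IsBdd g →
        hF m K k n (f + g) = hF m K k n f + hF m K k n g) ∧
      (∀ (r : ℝ) (f : (K _⦋n + 1⦌ × Gma (n + 1)) → ℝ), IsBdd f →
        hF m K k n (r • f) = r • hF m K k n f) ∧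
      (∃ C : ℝ, ∀ f : (K _⦋n + 1⦌ × Gma (n + 1)) → ℝ, IsBdd f →
        IsBdd (hF m K k n f) ∧ supN (hF m K k n f) ≤ C * supN f)) ∧
    (∀ f : (K _⦋0⦌ × Gma 0) → ℝ, IsBdd f →
      f - pstarF K 0 (mstarF m K 0 f) = hF m K k 0 (dF K 0 f)) ∧
    (∀ (n : ℕ) (f : (K _⦋n + 1⦌ × Gma (n + 1)) → ℝ), IsBdd f →
      f - pstarF K (n + 1) (mstarF m K (n + 1) f)
        = hF m K k (n + 1) (dF K (n + 1) f) + dF K n (hF m K k n f)) := by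
  -- boundedness of the inner averaged function
  have hinner : ∀ (n : ℕ) (f : (K _⦋n + 1⦌ × Gma (n + 1)) → ℝ), IsBdd f →
      ∀ (σ : K _⦋n⦌) (τ : Gma n), IsBdd (fun τ' => evalC f (k n σ τ τ')) := by
    intro n f hf σ τ
    obtain ⟨C, hC⟩ := hk_bdd n
    refine ⟨max C 0 * supN f, fun τ' => ?_⟩
    calc |evalC f (k n σ τ τ')| ≤ (l1 (k n σ τ τ') : ℝ) * supN f :=
          evalC_abs_le f _ (supN_nonneg f) (le_supN hf)
      _ ≤ max C 0 * supN f :=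
          mul_le_mul_of_nonneg_right ((hC σ τ τ').trans (le_max_left _ _)) (supN_nonneg f)
  refine ⟨fun n => ⟨?_, ?_, ?_⟩, ?_, ?_⟩
  · -- additivity
    intro f g hf hg
    funext x
    have e : (fun τ' => evalC (f + g) (k n x.1 x.2 τ'))
        = fun τ' => evalC f (k n x.1 x.2 τ') + evalC g (k n x.1 x.2 τ') :=
      funext fun τ' => evalC_addf f g _
    show Mext m n (fun τ' => evalC (f + g) (k n x.1 x.2 τ'))
        = Mext m n (fun τ' => evalC f (k n x.1 x.2 τ'))
          + Mext m n (fun τ' => evalC g (k n x.1 x.2 τ'))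
    rw [e]
    exact Mext_add m (hinner n f hf x.1 x.2) (hinner n g hg x.1 x.2)
  · -- homogeneity
    intro r f hf
    funext x
    have e : (fun τ' => evalC (r • f) (k n x.1 x.2 τ'))
        = fun τ' => r * evalC f (k n x.1 x.2 τ') :=
      funext fun τ' => evalC_smulf r f _
    show Mext m n (fun τ' => evalC (r • f) (k n x.1 x.2 τ'))
        = r * Mext m n (fun τ' => evalC f (k n x.1 x.2 τ'))
    rw [e]
    exact Mext_const_mul m r (hinner n f hf x.1 x.2)
  · -- boundedness
    obtain ⟨C, hC⟩ := hk_bdd n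
    refine ⟨max C 0, fun f hf => ?_⟩
    have key : ∀ x, |hF m K k n f x| ≤ max C 0 * supN f := by
      intro x
      have h1 : |Mext m n (fun τ' => evalC f (k n x.1 x.2 τ'))|
          ≤ supN (fun τ' => evalC f (k n x.1 x.2 τ')) :=
        Mext_abs_le m hnorm (hinner n f hf x.1 x.2)
      refine h1.trans (supN_le (mul_nonneg (le_max_right _ _) (supN_nonneg f)) ?_)
      intro τ'
      calc |evalC f (k n x.1 x.2 τ')| ≤ (l1 (k n x.1 x.2 τ') : ℝ) * supN f :=
            evalC_abs_le f _ (supN_nonneg f) (le_supN hf)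
        _ ≤ max C 0 * supN f :=
            mul_le_mul_of_nonneg_right ((hC x.1 x.2 τ').trans (le_max_left _ _))
              (supN_nonneg f)
    exact ⟨⟨_, key⟩, supN_le (mul_nonneg (le_max_right _ _) (supN_nonneg f)) key⟩
  · -- homotopy identity, degree 0
    intro f hf
    funext x
    obtain ⟨σ, τ⟩ := x
    have hfσ : IsBdd (fun τ'' : Gma 0 => f (σ, τ'')) :=
      comp_mem_bddFns hf fun τ'' => (σ, τ'')
    have e : (fun τ' => evalC (dF K 0 f) (k 0 σ τ τ'))
        = fun τ' => f (σ, τ) - f (σ, τ') := by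
      funext τ'
      rw [evalC_dF, hk0, evalC_sub', evalC_single', evalC_single']
    show f (σ, τ) - Mext m 0 (fun τ'' => f (σ, τ''))
        = Mext m 0 fun τ' => evalC (dF K 0 f) (k 0 σ τ τ')
    rw [e, Mext_sub m (isBdd_const (f (σ, τ))) hfσ, Mext_const m hconst]
  · -- homotopy identity, degree n + 1
    intro n f hf
    funext x
    obtain ⟨σ, τ⟩ := x
    have hfσ : IsBdd (fun τ'' : Gma (n + 1) => f (σ, τ'')) :=
      comp_mem_bddFns hf fun τ'' => (σ, τ'')
    have hgi : ∀ i : Fin (n + 2),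
        IsBdd (fun ρ : Gma n => evalC f (k n (K.δ i σ) (faceG i τ) ρ)) :=
      fun i => hinner n f hf _ _
    have hgi' : ∀ i : Fin (n + 2),
        IsBdd (fun τ' : Gma (n + 1) => evalC f (k n (K.δ i σ) (faceG i τ) (faceG i τ'))) :=
      fun i => comp_mem_bddFns (hgi i) (faceG i)
    have hterm : ∀ i : Fin (n + 2),
        IsBdd (fun τ' : Gma (n + 1) =>
          (-1 : ℝ) ^ (i : ℕ) * evalC f (k n (K.δ i σ) (faceG i τ) (faceG i τ'))) :=
      fun i => isBdd_const_mul _ (hgi' i)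
    have hbS : IsBdd (fun τ' : Gma (n + 1) => ∑ i : Fin (n + 2),
        (-1 : ℝ) ^ (i : ℕ) * evalC f (k n (K.δ i σ) (faceG i τ) (faceG i τ'))) :=
      isBdd_finsum Finset.univ _ fun i _ => hterm i
    have hsub1 : IsBdd (fun τ' : Gma (n + 1) => f (σ, τ) - f (σ, τ')) :=
      isBdd_sub (isBdd_const _) hfσ
    have hstep : (fun τ' => evalC (dF K (n + 1) f) (k (n + 1) σ τ τ'))
        = fun τ' => (f (σ, τ) - f (σ, τ'))
            - ∑ i : Fin (n + 2),
                (-1 : ℝ) ^ (i : ℕ) * evalC f (k n (K.δ i σ) (faceG i τ) (faceG i τ')) := by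
      funext τ'
      rw [evalC_dF, hk n σ τ τ', evalC_sub', evalC_sub', evalC_single', evalC_single',
        evalC_finsum']
      congr 1
      refine Finset.sum_congr rfl fun i _ => ?_
      rw [evalC_zsmul']
      push_cast
      ring
    have hMain : Mext m (n + 1) (fun τ' => evalC (dF K (n + 1) f) (k (n + 1) σ τ τ'))
        = (f (σ, τ) - Mext m (n + 1) (fun τ'' => f (σ, τ'')))
          - ∑ i : Fin (n + 2),
              (-1 : ℝ) ^ (i : ℕ) * hF m K k n f (facePfun K i (σ, τ)) := by
      rw [hstep, Mext_sub m hsub1 hbS, Mext_sub m (isBdd_const (f (σ, τ))) hfσ,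
        Mext_const m hconst, Mext_finsum m Finset.univ _ fun i _ => hterm i]
      congr 1
      refine Finset.sum_congr rfl fun i _ => ?_
      rw [Mext_const_mul m ((-1 : ℝ) ^ (i : ℕ)) (hgi' i),
        Mext_face m hcoherent i (hgi i)]
      rfl
    show f (σ, τ) - Mext m (n + 1) (fun τ'' => f (σ, τ''))
        = Mext m (n + 1) (fun τ' => evalC (dF K (n + 1) f) (k (n + 1) σ τ τ'))
          + ∑ i : Fin (n + 2), (-1 : ℝ) ^ (i : ℕ) * hF m K k n f (facePfun K i (σ, τ))
    rw [hMain]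
    ring
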